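/- arXiv:2210.08955 — 2 statements merged into one kernel-verified Lean document; each statement's English description precedes it below -/
import Mathlib

section
/- Let G and H be finite connected simple graphs, each with at least two vertices, and suppose G has a unique minimal MEG-set (i.e. there is an MEG-set of G contained in every MEG-set of G). Then meg(G □ H) = meg(G)·|V(H)| + meg(H)·|V(G)| − meg(G)·meg(H). -/
open SimpleGraph

/-- `S` is a monitoring edge-geodetic set (MEG-set) of `G`: for every edge `e` of `G`
there are `x, y ∈ S` whose distance in `G − e` differs from their distance in `G`
(including the case that they become disconnected in `G − e`). -/
def IsMEGSet {V : Type*} (G : SimpleGraph V) (S : Set V) : Prop :=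
  ∀ e ∈ G.edgeSet, ∃ x ∈ S, ∃ y ∈ S,
    ¬ (G.deleteEdges {e}).Reachable x y ∨ (G.deleteEdges {e}).dist x y ≠ G.dist x y

/-- The monitoring edge-geodetic number: the minimum cardinality of an MEG-set. -/
noncomputable def meg {V : Type*} [Fintype V] (G : SimpleGraph V) : ℕ :=
  sInf {n | ∃ S : Set V, IsMEGSet G S ∧ S.ncard = n}

/-- The strong product `G ⊠ H` of two simple graphs: `(a,b)` adjacent to `(c,d)` iff
`a = c` and `bd ∈ E(H)`, or `b = d` and `ac ∈ E(G)`, or `ac ∈ E(G)` and `bd ∈ E(H)`. -/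
def strongProd {α β : Type*} (G : SimpleGraph α) (H : SimpleGraph β) :
    SimpleGraph (α × β) where
  Adj x y := (x.1 = y.1 ∧ H.Adj x.2 y.2) ∨ (x.2 = y.2 ∧ G.Adj x.1 y.1) ∨
    (G.Adj x.1 y.1 ∧ H.Adj x.2 y.2)
  symm := ⟨fun x y => by
    rintro (⟨h1, h2⟩ | ⟨h1, h2⟩ | ⟨h1, h2⟩)
    · exact Or.inl ⟨h1.symm, h2.symm⟩
    · exact Or.inr (Or.inl ⟨h1.symm, h2.symm⟩)
    · exact Or.inr (Or.inr ⟨h1.symm, h2.symm⟩)⟩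
  loopless := ⟨fun x => by
    rintro (⟨_, h⟩ | ⟨_, h⟩ | ⟨h, _⟩)
    · exact H.irrefl h
    · exact G.irrefl h
    · exact G.irrefl h⟩

infixl:70 " ⊠ " => strongProd

section MEGaux

variable {V W : Type*} {G : SimpleGraph V} {H : SimpleGraph W}

/-- Projection of a box-product walk: lengths add up. -/
private lemma proj_exists :
    ∀ {x y : V × W} (w : (G □ H).Walk x y),
      ∃ p : G.Walk x.1 y.1, ∃ q : H.Walk x.2 y.2, p.length + q.length = w.length := by
  intro x y w
  induction w with
  | nil => exact ⟨.nil, .nil, rfl⟩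
  | @cons x m y h w ih =>
    obtain ⟨p, q, hpq⟩ := ih
    rcases boxProd_adj.mp h with ⟨hGa, h2⟩ | ⟨hHa, h1⟩
    · exact ⟨p.cons hGa, q.copy h2.symm rfl, by
        simp only [Walk.length_cons, Walk.length_copy]; omega⟩
    · exact ⟨p.copy h1.symm rfl, q.cons hHa, by
        simp only [Walk.length_cons, Walk.length_copy]; omega⟩

/-- Projection of a walk in the box product minus a `G`-type edge. -/
private lemma projDel_G (u v : V) (c : W) :
    ∀ {x y : V × W} (w : ((G □ H).deleteEdges {s((u,c),(v,c))}).Walk x y),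
      ∃ p : G.Walk x.1 y.1, ∃ q : H.Walk x.2 y.2, p.length + q.length = w.length ∧
        (x.2 = c → q.length = 0 →
          ∃ p' : (G.deleteEdges {s(u,v)}).Walk x.1 y.1, p'.length = w.length) := by
  intro x y w
  induction w with
  | nil => exact ⟨.nil, .nil, rfl, fun _ _ => ⟨.nil, rfl⟩⟩
  | @cons x m y h w ih =>
    obtain ⟨p, q, hpq, hcopy⟩ := ih
    obtain ⟨hadj, hne⟩ := (deleteEdges_adj).mp h
    rw [Set.mem_singleton_iff] at hne
    rcases boxProd_adj.mp hadj with ⟨hGa, h2⟩ | ⟨hHa, h1⟩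
    · refine ⟨p.cons hGa, q.copy h2.symm rfl, by
        simp only [Walk.length_cons, Walk.length_copy]; omega, ?_⟩
      intro hx2 hq0
      rw [Walk.length_copy] at hq0
      obtain ⟨p', hp'⟩ := hcopy (h2 ▸ hx2) hq0
      have hm2 : m.2 = c := h2 ▸ hx2
      have hadj' : (G.deleteEdges {s(u,v)}).Adj x.1 m.1 := by
        rw [deleteEdges_adj]
        refine ⟨hGa, ?_⟩
        rw [Set.mem_singleton_iff]
        intro hsym
        apply hne
        have hx : x = (x.1, c) := Prod.ext rfl hx2
        have hm : m = (m.1, c) := Prod.ext rfl hm2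
        rcases Sym2.eq_iff.mp hsym with ⟨e1, e2⟩ | ⟨e1, e2⟩
        · rw [hx, hm, e1, e2]
        · rw [hx, hm, e1, e2, Sym2.eq_swap]
      exact ⟨p'.cons hadj', by simp only [Walk.length_cons]; omega⟩
    · refine ⟨p.copy h1.symm rfl, q.cons hHa, by
        simp only [Walk.length_cons, Walk.length_copy]; omega, ?_⟩
      intro _ hq0
      simp at hq0

/-- Projection of a walk in the box product minus an `H`-type edge. -/
private lemma projDel_H (u v : W) (c : V) :
    ∀ {x y : V × W} (w : ((G □ H).deleteEdges {s((c,u),(c,v))}).Walk x y),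
      ∃ p : G.Walk x.1 y.1, ∃ q : H.Walk x.2 y.2, p.length + q.length = w.length ∧
        (x.1 = c → p.length = 0 →
          ∃ q' : (H.deleteEdges {s(u,v)}).Walk x.2 y.2, q'.length = w.length) := by
  intro x y w
  induction w with
  | nil => exact ⟨.nil, .nil, rfl, fun _ _ => ⟨.nil, rfl⟩⟩
  | @cons x m y h w ih =>
    obtain ⟨p, q, hpq, hcopy⟩ := ih
    obtain ⟨hadj, hne⟩ := (deleteEdges_adj).mp h
    rw [Set.mem_singleton_iff] at hne
    rcases boxProd_adj.mp hadj with ⟨hGa, h2⟩ | ⟨hHa, h1⟩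
    · refine ⟨p.cons hGa, q.copy h2.symm rfl, by
        simp only [Walk.length_cons, Walk.length_copy]; omega, ?_⟩
      intro _ hp0
      simp at hp0
    · refine ⟨p.copy h1.symm rfl, q.cons hHa, by
        simp only [Walk.length_cons, Walk.length_copy]; omega, ?_⟩
      intro hx1 hp0
      rw [Walk.length_copy] at hp0
      obtain ⟨q', hq'⟩ := hcopy (h1 ▸ hx1) hp0
      have hm1 : m.1 = c := h1 ▸ hx1
      have hadj' : (H.deleteEdges {s(u,v)}).Adj x.2 m.2 := by
        rw [deleteEdges_adj]
        refine ⟨hHa, ?_⟩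
        rw [Set.mem_singleton_iff]
        intro hsym
        apply hne
        have hx : x = (c, x.2) := Prod.ext hx1 rfl
        have hm : m = (c, m.2) := Prod.ext hm1 rfl
        rcases Sym2.eq_iff.mp hsym with ⟨e1, e2⟩ | ⟨e1, e2⟩
        · rw [hx, hm, e1, e2]
        · rw [hx, hm, e1, e2, Sym2.eq_swap]
      exact ⟨q'.cons hadj', by simp only [Walk.length_cons]; omega⟩

/-- Lift a walk of a subgraph of `G` into a copy of `G` inside the box product with
an edge deleted, provided the edge is avoided. -/
private lemma liftG {G₀ : SimpleGraph V} (hle : G₀ ≤ G) (e : Sym2 (V × W)) (c : W)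
    (hav : ∀ z₁ z₂ : V, G₀.Adj z₁ z₂ → s((z₁, c), (z₂, c)) ≠ e) :
    ∀ {a a' : V} (p : G₀.Walk a a'),
      ∃ w : ((G □ H).deleteEdges {e}).Walk (a, c) (a', c), w.length = p.length := by
  intro a a' p
  induction p with
  | nil => exact ⟨.nil, rfl⟩
  | @cons a m a' h p ih =>
    obtain ⟨w, hw⟩ := ih
    have hadj : ((G □ H).deleteEdges {e}).Adj (a, c) (m, c) := by
      rw [deleteEdges_adj]
      exact ⟨boxProd_adj.mpr (Or.inl ⟨hle h, rfl⟩), by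
        rw [Set.mem_singleton_iff]; exact hav _ _ h⟩
    exact ⟨w.cons hadj, by simp [hw]⟩

private lemma liftH {H₀ : SimpleGraph W} (hle : H₀ ≤ H) (e : Sym2 (V × W)) (c : V)
    (hav : ∀ z₁ z₂ : W, H₀.Adj z₁ z₂ → s((c, z₁), (c, z₂)) ≠ e) :
    ∀ {a a' : W} (p : H₀.Walk a a'),
      ∃ w : ((G □ H).deleteEdges {e}).Walk (c, a) (c, a'), w.length = p.length := by
  intro a a' p
  induction p with
  | nil => exact ⟨.nil, rfl⟩
  | @cons a m a' h p ih =>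
    obtain ⟨w, hw⟩ := ih
    have hadj : ((G □ H).deleteEdges {e}).Adj (c, a) (c, m) := by
      rw [deleteEdges_adj]
      exact ⟨boxProd_adj.mpr (Or.inr ⟨hle h, rfl⟩), by
        rw [Set.mem_singleton_iff]; exact hav _ _ h⟩
    exact ⟨w.cons hadj, by simp [hw]⟩

/-- Distance in a box product equals the sum of distances. -/
private lemma boxProd_dist (hG : G.Connected) (hH : H.Connected) (x y : V × W) :
    (G □ H).dist x y = G.dist x.1 y.1 + H.dist x.2 y.2 := by
  refine le_antisymm ?_ ?_
  · obtain ⟨p, hp⟩ := hG.exists_walk_length_eq_dist x.1 y.1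
    obtain ⟨q, hq⟩ := hH.exists_walk_length_eq_dist x.2 y.2
    refine le_trans (dist_le (((p.boxProdLeft H x.2).append
      (q.boxProdRight G y.1)).copy (by simp) (by simp))) ?_
    rw [Walk.length_copy, Walk.length_append]
    have e1 : (p.boxProdLeft H x.2).length = p.length := Walk.length_map _ _
    have e2 : (q.boxProdRight G y.1).length = q.length := Walk.length_map _ _
    omega
  · obtain ⟨w, hw⟩ := ((hG.boxProd hH).exists_walk_length_eq_dist x y)
    obtain ⟨p, q, hpq⟩ := proj_exists w
    have h1 := dist_le p
    have h2 := dist_le q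
    omega

/-- If `(x,y)` monitors `uv` in `G`, then `((x,c),(y,c))` monitors the copy of `uv`
in copy `c` inside the box product. -/
private lemma monitor_up_G (hG : G.Connected) (hH : H.Connected) {u v x y : V} (c : W)
    (hmon : ¬(G.deleteEdges {s(u,v)}).Reachable x y ∨
      (G.deleteEdges {s(u,v)}).dist x y ≠ G.dist x y) :
    ¬((G □ H).deleteEdges {s((u,c),(v,c))}).Reachable (x,c) (y,c) ∨
      ((G □ H).deleteEdges {s((u,c),(v,c))}).dist (x,c) (y,c) ≠
        (G □ H).dist (x,c) (y,c) := by
  by_cases hreach : ((G □ H).deleteEdges {s((u,c),(v,c))}).Reachable (x,c) (y,c)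
  · right
    intro hEq
    have hd : (G □ H).dist (x,c) (y,c) = G.dist x y := by
      rw [boxProd_dist hG hH]; simp
    obtain ⟨w, hw⟩ := hreach.exists_walk_length_eq_dist
    rw [hEq, hd] at hw
    obtain ⟨p, q, hpq, hcopy⟩ := projDel_G u v c w
    have h1 : G.dist x y ≤ p.length := dist_le p
    have hq0 : q.length = 0 := by omega
    obtain ⟨p', hp'⟩ := hcopy rfl hq0
    rw [hw] at hp'
    rcases hmon with hnr | hnd
    · exact hnr ⟨p'⟩
    · apply hnd
      exact le_antisymm (hp' ▸ dist_le p')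
        (Reachable.dist_anti (deleteEdges_le _) ⟨p'⟩)
  · exact Or.inl hreach

private lemma monitor_up_H (hG : G.Connected) (hH : H.Connected) {u v x y : W} (c : V)
    (hmon : ¬(H.deleteEdges {s(u,v)}).Reachable x y ∨
      (H.deleteEdges {s(u,v)}).dist x y ≠ H.dist x y) :
    ¬((G □ H).deleteEdges {s((c,u),(c,v))}).Reachable (c,x) (c,y) ∨
      ((G □ H).deleteEdges {s((c,u),(c,v))}).dist (c,x) (c,y) ≠
        (G □ H).dist (c,x) (c,y) := by
  by_cases hreach : ((G □ H).deleteEdges {s((c,u),(c,v))}).Reachable (c,x) (c,y)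
  · right
    intro hEq
    have hd : (G □ H).dist (c,x) (c,y) = H.dist x y := by
      rw [boxProd_dist hG hH]; simp
    obtain ⟨w, hw⟩ := hreach.exists_walk_length_eq_dist
    rw [hEq, hd] at hw
    obtain ⟨p, q, hpq, hcopy⟩ := projDel_H u v c w
    have h1 : H.dist x y ≤ q.length := dist_le q
    have hp0 : p.length = 0 := by omega
    obtain ⟨q', hq'⟩ := hcopy rfl hp0
    rw [hw] at hq'
    rcases hmon with hnr | hnd
    · exact hnr ⟨q'⟩
    · apply hnd
      exact le_antisymm (hq' ▸ dist_le q')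
        (Reachable.dist_anti (deleteEdges_le _) ⟨q'⟩)
  · exact Or.inl hreach

/-- Columns of an MEG-set of the box product are MEG-sets of `G`. -/
private lemma monitor_down_G (hG : G.Connected) (hH : H.Connected) {M : Set (V × W)}
    (hM : IsMEGSet (G □ H) M) (c : W) : IsMEGSet G {a | (a, c) ∈ M} := by
  intro e
  induction e using Sym2.ind with
  | _ u v =>
  intro he
  rw [mem_edgeSet] at he
  have heP : s((u,c),(v,c)) ∈ (G □ H).edgeSet := by
    rw [mem_edgeSet]; exact boxProd_adj.mpr (Or.inl ⟨he, rfl⟩)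
  obtain ⟨X, hX, Y, hY, hmon⟩ := hM _ heP
  obtain ⟨x, cx⟩ := X
  obtain ⟨y, cy⟩ := Y
  have no_good : ∀ w : ((G □ H).deleteEdges {s((u,c),(v,c))}).Walk (x, cx) (y, cy),
      w.length = (G □ H).dist (x, cx) (y, cy) → False := by
    intro w hw
    rcases hmon with hnr | hnd
    · exact hnr ⟨w⟩
    · exact hnd (le_antisymm (hw ▸ dist_le w)
        (Reachable.dist_anti (deleteEdges_le _) ⟨w⟩))
  -- first coordinate of the copies must be c
  have hcx : cx = c := by
    by_contra hne
    obtain ⟨p, hp⟩ := hG.exists_walk_length_eq_dist x y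
    obtain ⟨q, hq⟩ := hH.exists_walk_length_eq_dist cx cy
    obtain ⟨w1, hw1⟩ := liftG (le_refl G) (s((u,c),(v,c))) cx
      (fun z₁ z₂ hz heq => by
        rcases Sym2.eq_iff.mp heq with ⟨e1, e2⟩ | ⟨e1, e2⟩ <;>
          exact hne (Prod.ext_iff.mp e1).2) p
    obtain ⟨w2, hw2⟩ := liftH (le_refl H) (s((u,c),(v,c))) y
      (fun z₁ z₂ hz heq => by
        rcases Sym2.eq_iff.mp heq with ⟨e1, e2⟩ | ⟨e1, e2⟩
        · exact G.ne_of_adj he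
            ((Prod.ext_iff.mp e1).1.symm.trans (Prod.ext_iff.mp e2).1)
        · exact G.ne_of_adj he
            ((Prod.ext_iff.mp e2).1.symm.trans (Prod.ext_iff.mp e1).1)) q
    refine no_good (w1.append w2) ?_
    rw [Walk.length_append, boxProd_dist hG hH]
    dsimp only
    omega
  have hcy : cy = c := by
    by_contra hne
    obtain ⟨q, hq⟩ := hH.exists_walk_length_eq_dist cx cy
    obtain ⟨p, hp⟩ := hG.exists_walk_length_eq_dist x y
    obtain ⟨w1, hw1⟩ := liftH (le_refl H) (s((u,c),(v,c))) x
      (fun z₁ z₂ hz heq => by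
        rcases Sym2.eq_iff.mp heq with ⟨e1, e2⟩ | ⟨e1, e2⟩
        · exact G.ne_of_adj he
            ((Prod.ext_iff.mp e1).1.symm.trans (Prod.ext_iff.mp e2).1)
        · exact G.ne_of_adj he
            ((Prod.ext_iff.mp e2).1.symm.trans (Prod.ext_iff.mp e1).1)) q
    obtain ⟨w2, hw2⟩ := liftG (le_refl G) (s((u,c),(v,c))) cy
      (fun z₁ z₂ hz heq => by
        rcases Sym2.eq_iff.mp heq with ⟨e1, e2⟩ | ⟨e1, e2⟩ <;>
          exact hne (Prod.ext_iff.mp e1).2) p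
    refine no_good (w1.append w2) ?_
    rw [Walk.length_append, boxProd_dist hG hH]
    dsimp only
    omega
  rw [hcx] at hX
  rw [hcy] at hY
  rw [hcx, hcy] at no_good
  refine ⟨x, hX, y, hY, ?_⟩
  by_cases hr : (G.deleteEdges {s(u,v)}).Reachable x y
  · right
    intro hEqG
    obtain ⟨p', hp'⟩ := hr.exists_walk_length_eq_dist
    obtain ⟨w, hw⟩ := liftG (G.deleteEdges_le {s(u,v)}) (s((u,c),(v,c))) c
      (fun z₁ z₂ hz heq => by
        rw [deleteEdges_adj, Set.mem_singleton_iff] at hz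
        refine hz.2 ?_
        rcases Sym2.eq_iff.mp heq with ⟨e1, e2⟩ | ⟨e1, e2⟩
        · rw [show z₁ = u from (Prod.ext_iff.mp e1).1,
            show z₂ = v from (Prod.ext_iff.mp e2).1]
        · rw [show z₁ = v from (Prod.ext_iff.mp e1).1,
            show z₂ = u from (Prod.ext_iff.mp e2).1, Sym2.eq_swap]) p'
    refine no_good w ?_
    rw [hw, hp', hEqG, boxProd_dist hG hH]
    simp
  · exact Or.inl hr

/-- Rows of an MEG-set of the box product are MEG-sets of `H`. -/
private lemma monitor_down_H (hG : G.Connected) (hH : H.Connected) {M : Set (V × W)}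
    (hM : IsMEGSet (G □ H) M) (c : V) : IsMEGSet H {b | (c, b) ∈ M} := by
  intro e
  induction e using Sym2.ind with
  | _ u v =>
  intro he
  rw [mem_edgeSet] at he
  have heP : s((c,u),(c,v)) ∈ (G □ H).edgeSet := by
    rw [mem_edgeSet]; exact boxProd_adj.mpr (Or.inr ⟨he, rfl⟩)
  obtain ⟨X, hX, Y, hY, hmon⟩ := hM _ heP
  obtain ⟨cx, x⟩ := X
  obtain ⟨cy, y⟩ := Y
  have no_good : ∀ w : ((G □ H).deleteEdges {s((c,u),(c,v))}).Walk (cx, x) (cy, y),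
      w.length = (G □ H).dist (cx, x) (cy, y) → False := by
    intro w hw
    rcases hmon with hnr | hnd
    · exact hnr ⟨w⟩
    · exact hnd (le_antisymm (hw ▸ dist_le w)
        (Reachable.dist_anti (deleteEdges_le _) ⟨w⟩))
  have hcx : cx = c := by
    by_contra hne
    obtain ⟨q, hq⟩ := hH.exists_walk_length_eq_dist x y
    obtain ⟨p, hp⟩ := hG.exists_walk_length_eq_dist cx cy
    obtain ⟨w1, hw1⟩ := liftH (le_refl H) (s((c,u),(c,v))) cx
      (fun z₁ z₂ hz heq => by
        rcases Sym2.eq_iff.mp heq with ⟨e1, e2⟩ | ⟨e1, e2⟩ <;>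
          exact hne (Prod.ext_iff.mp e1).1) q
    obtain ⟨w2, hw2⟩ := liftG (le_refl G) (s((c,u),(c,v))) y
      (fun z₁ z₂ hz heq => by
        rcases Sym2.eq_iff.mp heq with ⟨e1, e2⟩ | ⟨e1, e2⟩
        · exact H.ne_of_adj he
            ((Prod.ext_iff.mp e1).2.symm.trans (Prod.ext_iff.mp e2).2)
        · exact H.ne_of_adj he
            ((Prod.ext_iff.mp e2).2.symm.trans (Prod.ext_iff.mp e1).2)) p
    refine no_good (w1.append w2) ?_
    rw [Walk.length_append, boxProd_dist hG hH]
    dsimp only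
    omega
  have hcy : cy = c := by
    by_contra hne
    obtain ⟨p, hp⟩ := hG.exists_walk_length_eq_dist cx cy
    obtain ⟨q, hq⟩ := hH.exists_walk_length_eq_dist x y
    obtain ⟨w1, hw1⟩ := liftG (le_refl G) (s((c,u),(c,v))) x
      (fun z₁ z₂ hz heq => by
        rcases Sym2.eq_iff.mp heq with ⟨e1, e2⟩ | ⟨e1, e2⟩
        · exact H.ne_of_adj he
            ((Prod.ext_iff.mp e1).2.symm.trans (Prod.ext_iff.mp e2).2)
        · exact H.ne_of_adj he
            ((Prod.ext_iff.mp e2).2.symm.trans (Prod.ext_iff.mp e1).2)) p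
    obtain ⟨w2, hw2⟩ := liftH (le_refl H) (s((c,u),(c,v))) cy
      (fun z₁ z₂ hz heq => by
        rcases Sym2.eq_iff.mp heq with ⟨e1, e2⟩ | ⟨e1, e2⟩ <;>
          exact hne (Prod.ext_iff.mp e1).1) q
    refine no_good (w1.append w2) ?_
    rw [Walk.length_append, boxProd_dist hG hH]
    dsimp only
    omega
  rw [hcx] at hX
  rw [hcy] at hY
  rw [hcx, hcy] at no_good
  refine ⟨x, hX, y, hY, ?_⟩
  by_cases hr : (H.deleteEdges {s(u,v)}).Reachable x y
  · right
    intro hEqH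
    obtain ⟨q', hq'⟩ := hr.exists_walk_length_eq_dist
    obtain ⟨w, hw⟩ := liftH (H.deleteEdges_le {s(u,v)}) (s((c,u),(c,v))) c
      (fun z₁ z₂ hz heq => by
        rw [deleteEdges_adj, Set.mem_singleton_iff] at hz
        refine hz.2 ?_
        rcases Sym2.eq_iff.mp heq with ⟨e1, e2⟩ | ⟨e1, e2⟩
        · rw [show z₁ = u from (Prod.ext_iff.mp e1).2,
            show z₂ = v from (Prod.ext_iff.mp e2).2]
        · rw [show z₁ = v from (Prod.ext_iff.mp e1).2,
            show z₂ = u from (Prod.ext_iff.mp e2).2, Sym2.eq_swap]) q'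
    refine no_good w ?_
    rw [hw, hq', hEqH, boxProd_dist hG hH]
    simp
  · exact Or.inl hr

private lemma univ_isMEG (G : SimpleGraph V) : IsMEGSet G Set.univ := by
  intro e
  induction e using Sym2.ind with
  | _ u v =>
  intro he
  rw [mem_edgeSet] at he
  refine ⟨u, trivial, v, trivial, Or.inr ?_⟩
  rw [dist_eq_one_iff_adj.mpr he]
  intro h1
  have h2 := dist_eq_one_iff_adj.mp h1
  rw [deleteEdges_adj] at h2
  exact h2.2 rfl

private lemma ncard_fiber_sum {V W : Type*} [Fintype V] [Fintype W] (M : Set (V × W)) :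
    M.ncard = ∑ a : V, {w | (a, w) ∈ M}.ncard := by
  classical
  rw [Set.ncard_eq_toFinset_card' M,
    Finset.card_eq_sum_card_fiberwise (f := Prod.fst) (t := Finset.univ)
      (fun z _ => Finset.mem_univ _)]
  refine Finset.sum_congr rfl fun a _ => ?_
  rw [Set.ncard_eq_toFinset_card' _]
  refine Finset.card_bij' (fun z _ => z.2) (fun w _ => (a, w)) ?_ ?_ ?_ ?_
  · intro z hz
    simp only [Finset.mem_filter, Set.mem_toFinset] at hz ⊢
    show (a, z.2) ∈ M
    rw [show ((a, z.2) : V × W) = z from Prod.ext hz.2.symm rfl]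
    exact hz.1
  · intro w hw
    simp only [Set.mem_toFinset] at hw
    simp only [Finset.mem_filter, Set.mem_toFinset]
    exact ⟨hw, trivial⟩
  · intro z hz
    simp only [Finset.mem_filter] at hz
    exact Prod.ext hz.2.symm rfl
  · intro w hw
    rfl

private lemma sum_ite_ncard {V : Type*} [Fintype V] (S : Set V)
    [DecidablePred (· ∈ S)] (c d : ℕ) :
    ∑ a : V, (if a ∈ S then c else d) =
      S.ncard * c + (Fintype.card V - S.ncard) * d := by
  classical
  rw [Finset.sum_ite, Finset.sum_const, Finset.sum_const, smul_eq_mul, smul_eq_mul]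
  have h1 : (Finset.univ.filter (fun a => a ∈ S)).card = S.ncard := by
    rw [Set.ncard_eq_toFinset_card' S, Set.toFinset_card, Fintype.card_subtype]
  have h2 := Finset.card_filter_add_card_filter_not
    (s := (Finset.univ : Finset V)) (p := fun a => a ∈ S)
  rw [Finset.card_univ] at h2
  rw [h1]
  congr 1
  have h3 : (Finset.univ.filter (fun a => ¬ a ∈ S)).card
      = Fintype.card V - S.ncard := by omega
  rw [h3]
end MEGaux

theorem meg_boxProd_of_uniqueMinimal {V W : Type*} [Fintype V] [Fintype W]
    (G : SimpleGraph V) (H : SimpleGraph W)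
    (hG : G.Connected) (hH : H.Connected)
    (hV : 1 < Fintype.card V) (hW : 1 < Fintype.card W)
    (hUnique : ∃ S₀ : Set V, IsMEGSet G S₀ ∧ ∀ R : Set V, IsMEGSet G R → S₀ ⊆ R) :
    meg (G □ H) =
      meg G * Fintype.card W + meg H * Fintype.card V - meg G * meg H := by
  classical
  obtain ⟨S₀, hS₀, hmin⟩ := hUnique
  have hHne : {n | ∃ S : Set W, IsMEGSet H S ∧ S.ncard = n}.Nonempty :=
    ⟨_, ⟨Set.univ, univ_isMEG H, rfl⟩⟩
  obtain ⟨T, hT, hTcard⟩ : ∃ S : Set W, IsMEGSet H S ∧ S.ncard = meg H :=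
    Nat.sInf_mem hHne
  have hS₀card : S₀.ncard = meg G := by
    refine le_antisymm ?_ (Nat.sInf_le ⟨S₀, hS₀, rfl⟩)
    obtain ⟨R, hR, hRcard⟩ : ∃ S : Set V, IsMEGSet G S ∧ S.ncard = meg G :=
      Nat.sInf_mem (s := {n | ∃ S : Set V, IsMEGSet G S ∧ S.ncard = n})
        ⟨_, Set.univ, univ_isMEG G, rfl⟩
    rw [← hRcard]
    exact Set.ncard_le_ncard (hmin R hR) R.toFinite
  have hmegGle : meg G ≤ Fintype.card V := by
    rw [← hS₀card]
    calc S₀.ncard ≤ (Set.univ : Set V).ncard :=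
          Set.ncard_le_ncard (Set.subset_univ _) Set.finite_univ
      _ = Fintype.card V := by rw [Set.ncard_univ, Nat.card_eq_fintype_card]
  set M : Set (V × W) := (S₀ ×ˢ (Set.univ : Set W)) ∪ ((Set.univ : Set V) ×ˢ T)
    with hMdef
  have hfiber : ∀ a : V, {w | (a, w) ∈ M} =
      if a ∈ S₀ then (Set.univ : Set W) else T := by
    intro a
    split_ifs with ha <;> ext w <;> simp [hMdef, ha]
  have hMcard : M.ncard =
      meg G * Fintype.card W + (Fintype.card V - meg G) * meg H := by
    rw [ncard_fiber_sum]
    have hcong : ∀ a : V, {w | (a, w) ∈ M}.ncard =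
        if a ∈ S₀ then Fintype.card W else meg H := by
      intro a
      rw [hfiber a]
      split_ifs
      · rw [Set.ncard_univ, Nat.card_eq_fintype_card]
      · exact hTcard
    rw [Finset.sum_congr rfl (fun a _ => hcong a), sum_ite_ncard, hS₀card]
  have hMmeg : IsMEGSet (G □ H) M := by
    intro e
    induction e using Sym2.ind with
    | _ z₁ z₂ =>
    intro he
    rw [mem_edgeSet] at he
    obtain ⟨a₁, b₁⟩ := z₁
    obtain ⟨a₂, b₂⟩ := z₂
    rcases boxProd_adj.mp he with ⟨hadj, h2⟩ | ⟨hadj, h1⟩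
    · dsimp only at hadj h2
      subst h2
      obtain ⟨x, hx, y, hy, hmon⟩ := hS₀ s(a₁, a₂) ((mem_edgeSet _).mpr hadj)
      exact ⟨(x, b₁), Or.inl (Set.mk_mem_prod hx trivial),
        (y, b₁), Or.inl (Set.mk_mem_prod hy trivial),
        monitor_up_G hG hH b₁ hmon⟩
    · dsimp only at hadj h1
      subst h1
      obtain ⟨x, hx, y, hy, hmon⟩ := hT s(b₁, b₂) ((mem_edgeSet _).mpr hadj)
      exact ⟨(a₁, x), Or.inr (Set.mk_mem_prod trivial hx),
        (a₁, y), Or.inr (Set.mk_mem_prod trivial hy),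
        monitor_up_H hG hH a₁ hmon⟩
  have hub : meg (G □ H) ≤
      meg G * Fintype.card W + (Fintype.card V - meg G) * meg H :=
    hMcard ▸ Nat.sInf_le ⟨M, hMmeg, rfl⟩
  obtain ⟨N, hN, hNcard⟩ :
      ∃ S : Set (V × W), IsMEGSet (G □ H) S ∧ S.ncard = meg (G □ H) :=
    Nat.sInf_mem (s := {n | ∃ S : Set (V × W), IsMEGSet (G □ H) S ∧ S.ncard = n})
      ⟨_, M, hMmeg, rfl⟩
  have hlb : meg G * Fintype.card W + (Fintype.card V - meg G) * meg H ≤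
      meg (G □ H) := by
    rw [← hNcard, ncard_fiber_sum, ← hS₀card, ← sum_ite_ncard S₀ (Fintype.card W) (meg H)]
    refine Finset.sum_le_sum fun a _ => ?_
    split_ifs with ha
    · have huniv : {w | (a, w) ∈ N} = Set.univ :=
        Set.eq_univ_of_forall (fun w => hmin _ (monitor_down_G hG hH hN w) ha)
      rw [huniv, Set.ncard_univ, Nat.card_eq_fintype_card]
    · exact Nat.sInf_le ⟨_, monitor_down_H hG hH hN a, rfl⟩
  have key : meg (G □ H) =
      meg G * Fintype.card W + (Fintype.card V - meg G) * meg H :=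
    le_antisymm hub hlb
  rw [key, Nat.sub_mul]
  have h3 : meg G * meg H ≤ Fintype.card V * meg H :=
    Nat.mul_le_mul_right _ hmegGle
  rw [mul_comm (meg H) (Fintype.card V)]
  generalize meg G * Fintype.card W = A at *
  generalize hB : Fintype.card V * meg H = B at *
  generalize meg G * meg H = C at *
  omega
end

section
/- For all integers m, n ≥ 2, the Cartesian product P_m □ P_n of two paths (the m × n grid graph) satisfies meg(P_m □ P_n) = m·n − (m−2)·(n−2), and P_m □ P_n has a unique minimal MEG-set. -/
open SimpleGraph

infixl:70 " ⊠ " => strongProd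

namespace MegGridAux

/-- Manhattan distance on the grid. -/
def gman {m n : ℕ} (x y : Fin m × Fin n) : ℕ :=
  Nat.dist x.1.val y.1.val + Nat.dist x.2.val y.2.val

lemma ascWalk {N : ℕ} : ∀ (k : ℕ) (a c : Fin N), a.val + k = c.val →
    ∃ w : (pathGraph N).Walk a c, w.length = k ∧
      ∀ q ∈ w.support, a.val ≤ q.val ∧ q.val ≤ c.val := by
  intro k
  induction k with
  | zero =>
    intro a c h
    have : a = c := Fin.ext (by omega)
    subst this
    exact ⟨Walk.nil, rfl, by simp⟩
  | succ k ih =>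
    intro a c h
    have ha' : a.val + 1 < N := by have := c.isLt; omega
    have hadj : (pathGraph N).Adj a ⟨a.val + 1, ha'⟩ := pathGraph_adj.mpr (Or.inl rfl)
    obtain ⟨w, hl, hs⟩ := ih ⟨a.val + 1, ha'⟩ c (by simp only [Fin.val_mk]; omega)
    refine ⟨Walk.cons hadj w, by simp [hl], ?_⟩
    intro q hq
    rw [Walk.support_cons] at hq
    rcases List.mem_cons.mp hq with rfl | hq
    · omega
    · have := hs q hq; simp only [Fin.val_mk] at this; omega

lemma pathWalk {N : ℕ} (a c : Fin N) :
    ∃ w : (pathGraph N).Walk a c, w.length = Nat.dist a.val c.val ∧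
      ∀ q ∈ w.support, min a.val c.val ≤ q.val ∧ q.val ≤ max a.val c.val := by
  rcases le_total a.val c.val with h | h
  · obtain ⟨w, hl, hs⟩ := ascWalk (c.val - a.val) a c (by omega)
    refine ⟨w, by rw [hl, Nat.dist_eq_sub_of_le h], fun q hq => ?_⟩
    have := hs q hq; omega
  · obtain ⟨w, hl, hs⟩ := ascWalk (a.val - c.val) c a (by omega)
    refine ⟨w.reverse, by rw [Walk.length_reverse, hl, Nat.dist_comm,
      Nat.dist_eq_sub_of_le h], fun q hq => ?_⟩
    rw [Walk.support_reverse] at hq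
    have := hs q (List.mem_reverse.mp hq); omega

lemma hwalkEx {m n : ℕ} (b : Fin n) (a c : Fin m) :
    ∃ w : (pathGraph m □ pathGraph n).Walk (a, b) (c, b),
      w.length = Nat.dist a.val c.val ∧
      ∀ q ∈ w.support, q.2 = b ∧ min a.val c.val ≤ q.1.val ∧ q.1.val ≤ max a.val c.val := by
  obtain ⟨w₀, hl, hs⟩ := pathWalk a c
  refine ⟨Walk.boxProdLeft (H := pathGraph n) b w₀, ?_, ?_⟩
  · exact (Walk.length_map _ w₀).trans hl
  · intro q hq
    replace hq : q ∈ (w₀.map ((pathGraph m).boxProdLeft (pathGraph n) b).toHom).support := hq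
    rw [Walk.support_map] at hq
    obtain ⟨q₀, hq₀, rfl⟩ := List.mem_map.mp hq
    exact ⟨rfl, (hs q₀ hq₀).1, (hs q₀ hq₀).2⟩

lemma vwalkEx {m n : ℕ} (a : Fin m) (b d : Fin n) :
    ∃ w : (pathGraph m □ pathGraph n).Walk (a, b) (a, d),
      w.length = Nat.dist b.val d.val ∧
      ∀ q ∈ w.support, q.1 = a ∧ min b.val d.val ≤ q.2.val ∧ q.2.val ≤ max b.val d.val := by
  obtain ⟨w₀, hl, hs⟩ := pathWalk b d
  refine ⟨Walk.boxProdRight (pathGraph m) a w₀, ?_, ?_⟩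
  · exact (Walk.length_map _ w₀).trans hl
  · intro q hq
    replace hq : q ∈ (w₀.map ((pathGraph m).boxProdRight (pathGraph n) a).toHom).support := hq
    rw [Walk.support_map] at hq
    obtain ⟨q₀, hq₀, rfl⟩ := List.mem_map.mp hq
    exact ⟨rfl, (hs q₀ hq₀).1, (hs q₀ hq₀).2⟩

lemma adj_gman {m n : ℕ} {x y : Fin m × Fin n}
    (h : (pathGraph m □ pathGraph n).Adj x y) : gman x y = 1 := by
  rcases h with ⟨h1, h2⟩ | ⟨h1, h2⟩
  · rcases pathGraph_adj.mp h1 with h | h <;>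
    · simp only [gman, h2, Nat.dist]; omega
  · rcases pathGraph_adj.mp h1 with h | h <;>
    · simp only [gman, h2, Nat.dist]; omega

lemma gman_le_length {m n : ℕ} {x y : Fin m × Fin n}
    (w : (pathGraph m □ pathGraph n).Walk x y) : gman x y ≤ w.length := by
  induction w with
  | nil => simp [gman]
  | cons h p ih =>
    rename_i u z v
    have t1 := Nat.dist.triangle_inequality u.1.val z.1.val v.1.val
    have t2 := Nat.dist.triangle_inequality u.2.val z.2.val v.2.val
    have ha := adj_gman h
    rw [Walk.length_cons]
    simp only [gman] at *
    omega

lemma grid_dist {m n : ℕ} (hm : 1 ≤ m) (hn : 1 ≤ n) (x y : Fin m × Fin n) :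
    (pathGraph m □ pathGraph n).dist x y = gman x y := by
  obtain ⟨m', rfl⟩ : ∃ m', m = m' + 1 := ⟨m - 1, by omega⟩
  obtain ⟨n', rfl⟩ : ∃ n', n = n' + 1 := ⟨n - 1, by omega⟩
  have hc : (pathGraph (m' + 1) □ pathGraph (n' + 1)).Connected :=
    (connected_boxProd).mpr ⟨pathGraph_connected _, pathGraph_connected _⟩
  refine le_antisymm ?_ ?_
  · obtain ⟨w1, hl1, _⟩ := hwalkEx x.2 x.1 y.1
    obtain ⟨w2, hl2, _⟩ := vwalkEx y.1 x.2 y.2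
    have := SimpleGraph.dist_le (w1.append w2)
    rwa [Walk.length_append, hl1, hl2] at this
  · obtain ⟨w, hw⟩ := (hc.preconnected x y).exists_walk_length_eq_dist
    rw [← hw]
    exact gman_le_length w

lemma straightH {m n : ℕ} (u₁ u₂ c : Fin m) (j : Fin n) (hu : u₁.val + 1 = u₂.val)
    (huc : u₂.val ≤ c.val) :
    ∀ (k : ℕ) (x : Fin m × Fin n) (w : (pathGraph m □ pathGraph n).Walk x (c, j)),
      w.length = k → x.2 = j → x.1.val ≤ u₁.val → w.length + x.1.val = c.val →
      s((u₁, j), (u₂, j)) ∈ w.edges := by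
  intro k
  induction k with
  | zero =>
    intro x w hk hx2 hxu hlen
    rw [hk] at hlen
    omega
  | succ k ih =>
    intro x w hk hx2 hxu hlen
    cases w with
    | nil => simp at hk
    | cons h p =>
      rename_i z
      rw [Walk.length_cons] at hk hlen
      have hxval : x.2.val = j.val := by rw [hx2]
      rcases id h with ⟨h1, h2⟩ | ⟨h1, h2⟩
      · -- horizontal step, x.2 = z.2
        have hz2 : z.2 = j := by rw [← h2, hx2]
        rcases pathGraph_adj.mp h1 with hstep | hstep
        · -- moving right
          by_cases hcase : x.1.val = u₁.val
          · have hx1 : x = ((u₁ : Fin m), j) := Prod.ext (Fin.ext hcase) hx2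
            have hz1 : z = ((u₂ : Fin m), j) := Prod.ext (Fin.ext (show z.1.val = u₂.val by omega)) hz2
            rw [Walk.edges_cons, List.mem_cons]
            left
            rw [hx1, hz1]
          · have := ih z p (by omega) hz2 (by omega) (by omega)
            rw [Walk.edges_cons, List.mem_cons]
            right
            exact this
        · -- moving left: contradiction
          exfalso
          have hb := gman_le_length p
          simp only [gman, Nat.dist] at hb
          have hzval : z.2.val = j.val := by rw [hz2]
          omega
      · -- vertical step: contradiction
        exfalso
        have hb := gman_le_length p
        simp only [gman, Nat.dist] at hb
        have hz1 : z.1.val = x.1.val := by rw [← h2]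
        rcases pathGraph_adj.mp h1 with hstep | hstep <;> omega

lemma straightV {m n : ℕ} (v₁ v₂ c : Fin n) (i : Fin m) (hv : v₁.val + 1 = v₂.val)
    (hvc : v₂.val ≤ c.val) :
    ∀ (k : ℕ) (x : Fin m × Fin n) (w : (pathGraph m □ pathGraph n).Walk x (i, c)),
      w.length = k → x.1 = i → x.2.val ≤ v₁.val → w.length + x.2.val = c.val →
      s((i, v₁), (i, v₂)) ∈ w.edges := by
  intro k
  induction k with
  | zero =>
    intro x w hk hx1 hxv hlen
    rw [hk] at hlen
    omega
  | succ k ih =>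
    intro x w hk hx1 hxv hlen
    cases w with
    | nil => simp at hk
    | cons h p =>
      rename_i z
      rw [Walk.length_cons] at hk hlen
      have hxval : x.1.val = i.val := by rw [hx1]
      rcases id h with ⟨h1, h2⟩ | ⟨h1, h2⟩
      · -- horizontal step: contradiction
        exfalso
        have hb := gman_le_length p
        simp only [gman, Nat.dist] at hb
        have hz2 : z.2.val = x.2.val := by rw [← h2]
        rcases pathGraph_adj.mp h1 with hstep | hstep <;> omega
      · -- vertical step, x.1 = z.1
        have hz1 : z.1 = i := by rw [← h2, hx1]
        rcases pathGraph_adj.mp h1 with hstep | hstep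
        · by_cases hcase : x.2.val = v₁.val
          · have hx2 : x = (i, (v₁ : Fin n)) := Prod.ext hx1 (Fin.ext hcase)
            have hz2 : z = (i, (v₂ : Fin n)) := Prod.ext hz1 (Fin.ext (show z.2.val = v₂.val by omega))
            rw [Walk.edges_cons, List.mem_cons]
            left
            rw [hx2, hz2]
          · have := ih z p (by omega) hz1 (by omega) (by omega)
            rw [Walk.edges_cons, List.mem_cons]
            right
            exact this
        · exfalso
          have hb := gman_le_length p
          simp only [gman, Nat.dist] at hb
          have hzval : z.1.val = i.val := by rw [hz1]
          omega

lemma avoidV {m n : ℕ} (i : Fin m) (v₀ v₁ sb : Fin n) (hne : v₀ ≠ v₁)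
    (hs : sb = v₀ ∨ sb = v₁)
    (hext : ∀ b d : Fin n, min b.val d.val ≤ sb.val → sb.val ≤ max b.val d.val →
      b = sb ∨ d = sb)
    (x y : Fin m × Fin n) (hx : x ≠ (i, sb)) (hy : y ≠ (i, sb)) :
    ∃ w : (pathGraph m □ pathGraph n).Walk x y, w.length = gman x y ∧
      s((i, v₀), (i, v₁)) ∉ w.edges := by
  obtain ⟨a, b⟩ := x; obtain ⟨c, d⟩ := y
  by_cases hb : b = sb
  · subst hb
    have hai : a ≠ i := fun h => hx (by rw [h])
    obtain ⟨w1, hl1, hs1⟩ := vwalkEx a b d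
    obtain ⟨w2, hl2, hs2⟩ := hwalkEx d a c
    refine ⟨w1.append w2, by simp only [Walk.length_append, hl1, hl2, gman]; omega, ?_⟩
    intro he
    have h0 := Walk.fst_mem_support_of_mem_edges _ he
    have h1 := Walk.snd_mem_support_of_mem_edges _ he
    rw [Walk.mem_support_append_iff] at h0 h1
    have hv0 : v₀ = d := by
      rcases h0 with h | h
      · exact absurd (hs1 _ h).1 (Ne.symm hai)
      · exact (hs2 _ h).1
    have hv1 : v₁ = d := by
      rcases h1 with h | h
      · exact absurd (hs1 _ h).1 (Ne.symm hai)
      · exact (hs2 _ h).1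
    exact hne (hv0.trans hv1.symm)
  · obtain ⟨w1, hl1, hs1⟩ := hwalkEx b a c
    obtain ⟨w2, hl2, hs2⟩ := vwalkEx c b d
    refine ⟨w1.append w2, by simp only [Walk.length_append, hl1, hl2, gman], ?_⟩
    intro he
    have hmem : ((i, sb) : Fin m × Fin n) ∈ (w1.append w2).support := by
      rcases hs with rfl | rfl
      · exact Walk.fst_mem_support_of_mem_edges _ he
      · exact Walk.snd_mem_support_of_mem_edges _ he
    rw [Walk.mem_support_append_iff] at hmem
    rcases hmem with h | h
    · exact hb ((hs1 _ h).1).symm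
    · obtain ⟨hfst, hmin, hmax⟩ := hs2 _ h
      rcases hext b d hmin hmax with h' | h'
      · exact hb h'
      · exact hy (Prod.ext hfst.symm h')

lemma avoidH {m n : ℕ} (j : Fin n) (u₀ u₁ sa : Fin m) (hne : u₀ ≠ u₁)
    (hs : sa = u₀ ∨ sa = u₁)
    (hext : ∀ a c : Fin m, min a.val c.val ≤ sa.val → sa.val ≤ max a.val c.val →
      a = sa ∨ c = sa)
    (x y : Fin m × Fin n) (hx : x ≠ (sa, j)) (hy : y ≠ (sa, j)) :
    ∃ w : (pathGraph m □ pathGraph n).Walk x y, w.length = gman x y ∧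
      s((u₀, j), (u₁, j)) ∉ w.edges := by
  obtain ⟨a, b⟩ := x; obtain ⟨c, d⟩ := y
  by_cases ha : a = sa
  · subst ha
    have hbj : b ≠ j := fun h => hx (by rw [h])
    obtain ⟨w1, hl1, hs1⟩ := hwalkEx b a c
    obtain ⟨w2, hl2, hs2⟩ := vwalkEx c b d
    refine ⟨w1.append w2, by simp only [Walk.length_append, hl1, hl2, gman], ?_⟩
    intro he
    have h0 := Walk.fst_mem_support_of_mem_edges _ he
    have h1 := Walk.snd_mem_support_of_mem_edges _ he
    rw [Walk.mem_support_append_iff] at h0 h1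
    have hu0 : u₀ = c := by
      rcases h0 with h | h
      · exact absurd (hs1 _ h).1 (Ne.symm hbj)
      · exact (hs2 _ h).1
    have hu1 : u₁ = c := by
      rcases h1 with h | h
      · exact absurd (hs1 _ h).1 (Ne.symm hbj)
      · exact (hs2 _ h).1
    exact hne (hu0.trans hu1.symm)
  · obtain ⟨w1, hl1, hs1⟩ := vwalkEx a b d
    obtain ⟨w2, hl2, hs2⟩ := hwalkEx d a c
    refine ⟨w1.append w2, by simp only [Walk.length_append, hl1, hl2, gman]; omega, ?_⟩
    intro he
    have hmem : ((sa, j) : Fin m × Fin n) ∈ (w1.append w2).support := by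
      rcases hs with rfl | rfl
      · exact Walk.fst_mem_support_of_mem_edges _ he
      · exact Walk.snd_mem_support_of_mem_edges _ he
    rw [Walk.mem_support_append_iff] at hmem
    rcases hmem with h | h
    · exact ha ((hs1 _ h).1).symm
    · obtain ⟨hsnd, hmin, hmax⟩ := hs2 _ h
      rcases hext a c hmin hmax with h' | h'
      · exact ha h'
      · exact hy (Prod.ext h' hsnd.symm)

lemma dist_eq_of_avoid {m n : ℕ} (hm : 1 ≤ m) (hn : 1 ≤ n) {x y : Fin m × Fin n}
    {e : Sym2 (Fin m × Fin n)}
    (w : (pathGraph m □ pathGraph n).Walk x y) (hlen : w.length = gman x y)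
    (hne : e ∉ w.edges) :
    ((pathGraph m □ pathGraph n).deleteEdges {e}).Reachable x y ∧
    ((pathGraph m □ pathGraph n).deleteEdges {e}).dist x y
      = (pathGraph m □ pathGraph n).dist x y := by
  have hsub : ∀ e' ∈ w.edges, e' ∉ ({e} : Set (Sym2 (Fin m × Fin n))) := by
    intro e' he' hmem
    rw [Set.mem_singleton_iff] at hmem
    exact hne (hmem ▸ he')
  have hr : ((pathGraph m □ pathGraph n).deleteEdges {e}).Reachable x y :=
    ⟨w.toDeleteEdges {e} hsub⟩
  refine ⟨hr, le_antisymm ?_ ?_⟩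
  · calc ((pathGraph m □ pathGraph n).deleteEdges {e}).dist x y
        ≤ (w.toDeleteEdges {e} hsub).length := SimpleGraph.dist_le _
      _ = w.length := Walk.length_transfer _ _
      _ = gman x y := hlen
      _ = (pathGraph m □ pathGraph n).dist x y := (grid_dist hm hn x y).symm
  · obtain ⟨w1, hw1⟩ := hr.exists_walk_length_eq_dist
    have hsub1 : ∀ e' ∈ w1.edges, e' ∈ (pathGraph m □ pathGraph n).edgeSet := by
      intro e' he'
      have := w1.edges_subset_edgeSet he'
      rw [edgeSet_deleteEdges] at this
      exact this.1
    rw [grid_dist hm hn x y, ← hw1]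
    have := gman_le_length (w1.transfer _ hsub1)
    rwa [Walk.length_transfer] at this

/-- The boundary of the grid. -/
def Bset (m n : ℕ) : Set (Fin m × Fin n) :=
  {p | p.1.val = 0 ∨ p.1.val = m - 1 ∨ p.2.val = 0 ∨ p.2.val = n - 1}

lemma interior_ncard {N : ℕ} (hN : 2 ≤ N) :
    ({a : Fin N | a.val ≠ 0 ∧ a.val ≠ N - 1}).ncard = N - 2 := by
  set I : Set (Fin N) := {a : Fin N | a.val ≠ 0 ∧ a.val ≠ N - 1}
  have hIc : Iᶜ = {(⟨0, by omega⟩ : Fin N), ⟨N - 1, by omega⟩} := by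
    ext a
    simp only [I, Set.mem_compl_iff, Set.mem_setOf_eq, Set.mem_insert_iff,
      Set.mem_singleton_iff, not_and_or, not_not]
    constructor
    · rintro (h | h)
      · left; exact Fin.ext h
      · right; exact Fin.ext h
    · rintro (rfl | rfl)
      · left; rfl
      · right; rfl
  have h2 : Iᶜ.ncard = 2 := by
    rw [hIc]
    exact Set.ncard_pair (by
      intro h
      have := congrArg Fin.val h
      simp only [Fin.val_mk] at this
      omega)
  have := Set.ncard_add_ncard_compl I
  rw [h2] at this
  rw [Nat.card_eq_fintype_card, Fintype.card_fin] at this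
  omega

lemma bset_ncard {m n : ℕ} (hm : 2 ≤ m) (hn : 2 ≤ n) :
    (Bset m n).ncard = m * n - (m - 2) * (n - 2) := by
  set I : Set (Fin m) := {a : Fin m | a.val ≠ 0 ∧ a.val ≠ m - 1}
  set J : Set (Fin n) := {a : Fin n | a.val ≠ 0 ∧ a.val ≠ n - 1}
  have hC : (Bset m n)ᶜ = I ×ˢ J := by
    ext ⟨a, b⟩
    simp only [Bset, I, J, Set.mem_compl_iff, Set.mem_setOf_eq, Set.mem_prod]
    tauto
  have hCcard : ((Bset m n)ᶜ).ncard = (m - 2) * (n - 2) := by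
    rw [hC, ← Nat.card_coe_set_eq, Nat.card_congr (Equiv.Set.prod I J), Nat.card_prod,
      Nat.card_coe_set_eq, Nat.card_coe_set_eq, interior_ncard hm, interior_ncard hn]
  have := Set.ncard_add_ncard_compl (Bset m n)
  rw [hCcard, Nat.card_eq_fintype_card, Fintype.card_prod, Fintype.card_fin,
    Fintype.card_fin] at this
  omega

lemma meg_h {m n : ℕ} (hm : 2 ≤ m) (hn : 2 ≤ n) (u₁ u₂ : Fin m) (j : Fin n)
    (hu : u₁.val + 1 = u₂.val) :
    ∃ x ∈ Bset m n, ∃ y ∈ Bset m n,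
      ¬ ((pathGraph m □ pathGraph n).deleteEdges {s((u₁, j), (u₂, j))}).Reachable x y ∨
        ((pathGraph m □ pathGraph n).deleteEdges {s((u₁, j), (u₂, j))}).dist x y ≠
          (pathGraph m □ pathGraph n).dist x y := by
  refine ⟨((⟨0, by omega⟩ : Fin m), j), Or.inl rfl,
    ((⟨m - 1, by omega⟩ : Fin m), j), Or.inr (Or.inl rfl), ?_⟩
  by_cases hr : ((pathGraph m □ pathGraph n).deleteEdges {s((u₁, j), (u₂, j))}).Reachable
      ((⟨0, by omega⟩ : Fin m), j) ((⟨m - 1, by omega⟩ : Fin m), j)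
  · right
    intro hdist
    have hdg : (pathGraph m □ pathGraph n).dist
        ((⟨0, by omega⟩ : Fin m), j) ((⟨m - 1, by omega⟩ : Fin m), j) = m - 1 := by
      rw [grid_dist (by omega) (by omega)]
      simp only [gman, Nat.dist]
      omega
    obtain ⟨w, hw⟩ := hr.exists_walk_length_eq_dist
    have hsub : ∀ e' ∈ w.edges, e' ∈ (pathGraph m □ pathGraph n).edgeSet := by
      intro e' he'
      have := w.edges_subset_edgeSet he'
      rw [edgeSet_deleteEdges] at this
      exact this.1
    have hu2 : u₂.val ≤ m - 1 := by have := u₂.isLt; omega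
    have hmem := straightH u₁ u₂ ⟨m - 1, by omega⟩ j hu hu2
      (w.transfer _ hsub).length _ (w.transfer _ hsub) rfl rfl (Nat.zero_le _)
      (by show (w.transfer _ hsub).length + 0 = m - 1
          rw [Walk.length_transfer, hw, hdist, hdg]; omega)
    rw [Walk.edges_transfer] at hmem
    have := w.edges_subset_edgeSet hmem
    rw [edgeSet_deleteEdges] at this
    exact this.2 rfl
  · left; exact hr

lemma meg_v {m n : ℕ} (hm : 2 ≤ m) (hn : 2 ≤ n) (v₁ v₂ : Fin n) (i : Fin m)
    (hv : v₁.val + 1 = v₂.val) :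
    ∃ x ∈ Bset m n, ∃ y ∈ Bset m n,
      ¬ ((pathGraph m □ pathGraph n).deleteEdges {s((i, v₁), (i, v₂))}).Reachable x y ∨
        ((pathGraph m □ pathGraph n).deleteEdges {s((i, v₁), (i, v₂))}).dist x y ≠
          (pathGraph m □ pathGraph n).dist x y := by
  refine ⟨(i, (⟨0, by omega⟩ : Fin n)), Or.inr (Or.inr (Or.inl rfl)),
    (i, (⟨n - 1, by omega⟩ : Fin n)), Or.inr (Or.inr (Or.inr rfl)), ?_⟩
  by_cases hr : ((pathGraph m □ pathGraph n).deleteEdges {s((i, v₁), (i, v₂))}).Reachable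
      (i, (⟨0, by omega⟩ : Fin n)) (i, (⟨n - 1, by omega⟩ : Fin n))
  · right
    intro hdist
    have hdg : (pathGraph m □ pathGraph n).dist
        (i, (⟨0, by omega⟩ : Fin n)) (i, (⟨n - 1, by omega⟩ : Fin n)) = n - 1 := by
      rw [grid_dist (by omega) (by omega)]
      simp only [gman, Nat.dist]
      omega
    obtain ⟨w, hw⟩ := hr.exists_walk_length_eq_dist
    have hsub : ∀ e' ∈ w.edges, e' ∈ (pathGraph m □ pathGraph n).edgeSet := by
      intro e' he'
      have := w.edges_subset_edgeSet he'
      rw [edgeSet_deleteEdges] at this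
      exact this.1
    have hv2 : v₂.val ≤ n - 1 := by have := v₂.isLt; omega
    have hmem := straightV v₁ v₂ ⟨n - 1, by omega⟩ i hv hv2
      (w.transfer _ hsub).length _ (w.transfer _ hsub) rfl rfl (Nat.zero_le _)
      (by show (w.transfer _ hsub).length + 0 = n - 1
          rw [Walk.length_transfer, hw, hdist, hdg]; omega)
    rw [Walk.edges_transfer] at hmem
    have := w.edges_subset_edgeSet hmem
    rw [edgeSet_deleteEdges] at this
    exact this.2 rfl
  · left; exact hr

lemma bset_meg {m n : ℕ} (hm : 2 ≤ m) (hn : 2 ≤ n) :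
    IsMEGSet (pathGraph m □ pathGraph n) (Bset m n) := by
  intro e he
  revert he
  refine Sym2.ind (fun p q => ?_) e
  intro he
  rw [mem_edgeSet] at he
  obtain ⟨p1, p2⟩ := p
  obtain ⟨q1, q2⟩ := q
  rcases he with ⟨h1, h2⟩ | ⟨h1, h2⟩
  · -- horizontal edge
    simp only at h1 h2
    subst h2
    rcases pathGraph_adj.mp h1 with hd | hd
    · exact meg_h hm hn p1 q1 p2 hd
    · rw [Sym2.eq_swap]
      exact meg_h hm hn q1 p1 p2 hd
  · -- vertical edge
    simp only at h1 h2
    subst h2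
    rcases pathGraph_adj.mp h1 with hd | hd
    · exact meg_v hm hn p2 q2 p1 hd
    · rw [Sym2.eq_swap]
      exact meg_v hm hn q2 p2 p1 hd

lemma forced_of_avoid {m n : ℕ} (hm : 2 ≤ m) (hn : 2 ≤ n) (R : Set (Fin m × Fin n))
    (hR : IsMEGSet (pathGraph m □ pathGraph n) R) (p : Fin m × Fin n)
    (e : Sym2 (Fin m × Fin n)) (he : e ∈ (pathGraph m □ pathGraph n).edgeSet)
    (havoid : ∀ x y : Fin m × Fin n, x ≠ p → y ≠ p →
      ∃ w : (pathGraph m □ pathGraph n).Walk x y, w.length = gman x y ∧ e ∉ w.edges) :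
    p ∈ R := by
  obtain ⟨x, hxR, y, hyR, hcond⟩ := hR e he
  by_cases hx : x = p
  · exact hx ▸ hxR
  by_cases hy : y = p
  · exact hy ▸ hyR
  obtain ⟨w, hl, hne⟩ := havoid x y hx hy
  obtain ⟨hr, hd⟩ := dist_eq_of_avoid (by omega) (by omega) w hl hne
  rcases hcond with h | h
  · exact absurd hr h
  · exact absurd hd h

lemma bset_forced {m n : ℕ} (hm : 2 ≤ m) (hn : 2 ≤ n) (R : Set (Fin m × Fin n))
    (hR : IsMEGSet (pathGraph m □ pathGraph n) R) : Bset m n ⊆ R := by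
  rintro ⟨a, b⟩ hp
  rcases hp with ha0 | ha1 | hb0 | hb1
  · -- a.val = 0
    have ha : a.val = 0 := ha0
    refine forced_of_avoid hm hn R hR (a, b) s((a, b), ((⟨1, by omega⟩ : Fin m), b))
      ((mem_edgeSet _).mpr (Or.inl ⟨pathGraph_adj.mpr
        (Or.inl (show a.val + 1 = 1 by omega)), rfl⟩)) ?_
    intro x y hx hy
    exact avoidH b a ⟨1, by omega⟩ a
      (fun h => by have h' : a.val = 1 := congrArg Fin.val h; omega)
      (Or.inl rfl)
      (by intro a' c' h1 h2
          have : a'.val = 0 ∨ c'.val = 0 := by omega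
          rcases this with h | h
          · exact Or.inl (Fin.ext (by omega))
          · exact Or.inr (Fin.ext (by omega)))
      x y hx hy
  · -- a.val = m - 1
    have ha : a.val = m - 1 := ha1
    refine forced_of_avoid hm hn R hR (a, b) s(((⟨m - 2, by omega⟩ : Fin m), b), (a, b))
      ((mem_edgeSet _).mpr (Or.inl ⟨pathGraph_adj.mpr
        (Or.inl (show m - 2 + 1 = a.val by omega)), rfl⟩)) ?_
    intro x y hx hy
    exact avoidH b ⟨m - 2, by omega⟩ a a
      (fun h => by have h' : m - 2 = a.val := congrArg Fin.val h; omega)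
      (Or.inr rfl)
      (by intro a' c' h1 h2
          have ha' := a'.isLt; have hc' := c'.isLt
          have : a'.val = m - 1 ∨ c'.val = m - 1 := by omega
          rcases this with h | h
          · exact Or.inl (Fin.ext (by omega))
          · exact Or.inr (Fin.ext (by omega)))
      x y hx hy
  · -- b.val = 0
    have hb : b.val = 0 := hb0
    refine forced_of_avoid hm hn R hR (a, b) s((a, b), (a, (⟨1, by omega⟩ : Fin n)))
      ((mem_edgeSet _).mpr (Or.inr ⟨pathGraph_adj.mpr
        (Or.inl (show b.val + 1 = 1 by omega)), rfl⟩)) ?_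
    intro x y hx hy
    exact avoidV a b ⟨1, by omega⟩ b
      (fun h => by have h' : b.val = 1 := congrArg Fin.val h; omega)
      (Or.inl rfl)
      (by intro b' d' h1 h2
          have : b'.val = 0 ∨ d'.val = 0 := by omega
          rcases this with h | h
          · exact Or.inl (Fin.ext (by omega))
          · exact Or.inr (Fin.ext (by omega)))
      x y hx hy
  · -- b.val = n - 1
    have hb : b.val = n - 1 := hb1
    refine forced_of_avoid hm hn R hR (a, b) s((a, (⟨n - 2, by omega⟩ : Fin n)), (a, b))
      ((mem_edgeSet _).mpr (Or.inr ⟨pathGraph_adj.mpr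
        (Or.inl (show n - 2 + 1 = b.val by omega)), rfl⟩)) ?_
    intro x y hx hy
    exact avoidV a ⟨n - 2, by omega⟩ b b
      (fun h => by have h' : n - 2 = b.val := congrArg Fin.val h; omega)
      (Or.inr rfl)
      (by intro b' d' h1 h2
          have hb' := b'.isLt; have hd' := d'.isLt
          have : b'.val = n - 1 ∨ d'.val = n - 1 := by omega
          rcases this with h | h
          · exact Or.inl (Fin.ext (by omega))
          · exact Or.inr (Fin.ext (by omega)))
      x y hx hy

end MegGridAux

open MegGridAux
theorem meg_grid (m n : ℕ) (hm : 2 ≤ m) (hn : 2 ≤ n) :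
    meg (pathGraph m □ pathGraph n) = m * n - (m - 2) * (n - 2) ∧
    ∃ S : Set (Fin m × Fin n), IsMEGSet (pathGraph m □ pathGraph n) S ∧
      ∀ R : Set (Fin m × Fin n), IsMEGSet (pathGraph m □ pathGraph n) R → S ⊆ R := by
  have hmeg := bset_meg hm hn
  have hcard := bset_ncard hm hn
  constructor
  · apply le_antisymm
    · exact Nat.sInf_le ⟨Bset m n, hmeg, hcard⟩
    · refine le_csInf ⟨(Bset m n).ncard, Bset m n, hmeg, rfl⟩ ?_
      rintro t ⟨S, hS, rfl⟩
      rw [← hcard]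
      exact Set.ncard_le_ncard (bset_forced hm hn S hS) (Set.toFinite S)
  · exact ⟨Bset m n, hmeg, fun R hR => bset_forced hm hn R hR⟩
end
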